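/- Fix x ∈ [−b,b]^n, a matrix M ∈ R^{m×n}, and c ∈ R^m. Define a random vector g̃ by: sample (i,j) with probability q_{ij} = |M_{ij}|/Σ_{i',j'}|M_{i'j'}| and independently i' with probability |c_{i'}|/‖c‖_1, and set g̃ = −(M_{ij} x_j / q_{ij}) e_i + (c_{i'}/q_{i'}) e_{i'}. Then E[g̃] = −Mx + c, ‖g̃‖_∞ ≤ m(b‖M‖_∞ + ‖c‖_∞) almost surely, and for every probability vector y' ∈ Δ^m, E[Σ_i y'_i g̃_i²] ≤ 2m(‖c‖_∞² + b²‖M‖_∞²). -/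

import Mathlib

set_option maxHeartbeats 1000000


open Finset

/-- The y-side gradient estimator for the ℓ∞-ℓ₁ game: unbiased for `−Mx + c`,
bounded entries, and bounded second moment in every local norm on the simplex. -/
theorem stmt7 {m n : ℕ} [NeZero m] [NeZero n]
    (M : Matrix (Fin m) (Fin n) ℝ) (c : Fin m → ℝ) (b : ℝ) (hb : 0 ≤ b)
    (x : Fin n → ℝ) (hx : ∀ j, |x j| ≤ b)
    (hM : M ≠ 0) (hc : c ≠ 0)
    (qM : Fin m × Fin n → ℝ)
    (hqM : ∀ ij, qM ij = |M ij.1 ij.2| / ∑ ij' : Fin m × Fin n, |M ij'.1 ij'.2|)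
    (qc : Fin m → ℝ) (hqc : ∀ i', qc i' = |c i'| / ∑ i, |c i|)
    (g : (Fin m × Fin n) × Fin m → Fin m → ℝ)
    (hg : ∀ ω k, g ω k =
      -(if k = ω.1.1 then M ω.1.1 ω.1.2 * x ω.1.2 / qM ω.1 else 0) +
      (if k = ω.2 then c ω.2 / qc ω.2 else 0)) :
    (∀ k, ∑ ω : (Fin m × Fin n) × Fin m, (qM ω.1 * qc ω.2) * g ω k
        = -(∑ j, M k j * x j) + c k) ∧
    (∀ ω : (Fin m × Fin n) × Fin m, ∀ k, |g ω k| ≤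
        m * (b * (Finset.univ.sup' Finset.univ_nonempty (fun i => ∑ j, |M i j|)) +
          Finset.univ.sup' Finset.univ_nonempty (fun i => |c i|))) ∧
    (∀ y' : Fin m → ℝ, (∀ i, 0 ≤ y' i) → ∑ i, y' i = 1 →
      ∑ ω : (Fin m × Fin n) × Fin m, (qM ω.1 * qc ω.2) * (∑ i, y' i * (g ω i) ^ 2)
        ≤ 2 * m * ((Finset.univ.sup' Finset.univ_nonempty (fun i => |c i|)) ^ 2 +
            b ^ 2 * (Finset.univ.sup' Finset.univ_nonempty (fun i => ∑ j, |M i j|)) ^ 2)) := by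
  classical
  set SM := ∑ ij' : Fin m × Fin n, |M ij'.1 ij'.2| with hSMdef
  set Sc := ∑ i, |c i| with hScdef
  set KM := Finset.univ.sup' Finset.univ_nonempty (fun i : Fin m => ∑ j, |M i j|) with hKMdef
  set Kc := Finset.univ.sup' Finset.univ_nonempty (fun i : Fin m => |c i|) with hKcdef
  have hSM0 : 0 < SM := by
    obtain ⟨i, hi⟩ : ∃ i, M i ≠ 0 := by
      by_contra h; push_neg at h; exact hM (by ext i j; simp [h i])
    obtain ⟨j, hj⟩ : ∃ j, M i j ≠ 0 := by
      by_contra h; push_neg at h; exact hi (funext h)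
    exact Finset.sum_pos' (fun p _ => abs_nonneg _)
      ⟨(i, j), Finset.mem_univ _, abs_pos.mpr hj⟩
  have hSc0 : 0 < Sc := by
    obtain ⟨i, hi⟩ : ∃ i, c i ≠ 0 := by
      by_contra h; push_neg at h; exact hc (funext h)
    exact Finset.sum_pos' (fun p _ => abs_nonneg _) ⟨i, Finset.mem_univ _, abs_pos.mpr hi⟩
  have hqMnn : ∀ p, 0 ≤ qM p := fun p => by rw [hqM]; positivity
  have hqcnn : ∀ i, 0 ≤ qc i := fun i => by rw [hqc]; positivity
  have hsumqM : ∑ p : Fin m × Fin n, qM p = 1 := by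
    simp only [hqM]; rw [← Finset.sum_div, div_self hSM0.ne']
  have hsumqc : ∑ i, qc i = 1 := by
    simp only [hqc]; rw [← Finset.sum_div, div_self hSc0.ne']
  have hKMle : ∀ i, ∑ j, |M i j| ≤ KM := fun i => by
    rw [hKMdef]
    exact Finset.le_sup' (f := fun i : Fin m => ∑ j, |M i j|) (Finset.mem_univ i)
  have hKcle : ∀ i, |c i| ≤ Kc := fun i => by
    rw [hKcdef]
    exact Finset.le_sup' (f := fun i : Fin m => |c i|) (Finset.mem_univ i)
  have hMKM : ∀ i j, |M i j| ≤ KM := by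
    intro i j
    refine le_trans ?_ (hKMle i)
    exact Finset.single_le_sum (f := fun j => |M i j|) (fun j _ => abs_nonneg _)
      (Finset.mem_univ j)
  have i0 : Fin m := ⟨0, Nat.pos_of_ne_zero (NeZero.ne m)⟩
  have hKM0 : 0 ≤ KM := le_trans (abs_nonneg _) (hMKM i0 ⟨0, Nat.pos_of_ne_zero (NeZero.ne n)⟩)
  have hKc0 : 0 ≤ Kc := le_trans (abs_nonneg _) (hKcle i0)
  have hSMle : SM ≤ m * KM := by
    rw [hSMdef, Fintype.sum_prod_type]
    calc ∑ i : Fin m, ∑ j, |M i j| ≤ ∑ _i : Fin m, KM :=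
          Finset.sum_le_sum fun i _ => hKMle i
      _ = m * KM := by simp [Finset.sum_const, Finset.card_univ, mul_comm]
  have hScle : Sc ≤ m * Kc := by
    calc Sc ≤ ∑ _i : Fin m, Kc := Finset.sum_le_sum fun i _ => hKcle i
      _ = m * Kc := by simp [Finset.sum_const, Finset.card_univ, mul_comm]
  have hA : ∀ p : Fin m × Fin n, qM p * (M p.1 p.2 * x p.2 / qM p) = M p.1 p.2 * x p.2 := by
    intro p
    rcases eq_or_ne (M p.1 p.2) 0 with h | h
    · simp [h]
    · have hq : qM p ≠ 0 := by
        rw [hqM]; exact div_ne_zero (abs_ne_zero.mpr h) hSM0.ne'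
      field_simp
  have hB : ∀ i, qc i * (c i / qc i) = c i := by
    intro i
    rcases eq_or_ne (c i) 0 with h | h
    · simp [h]
    · have hq : qc i ≠ 0 := by
        rw [hqc]; exact div_ne_zero (abs_ne_zero.mpr h) hSc0.ne'
      field_simp
  -- pointwise bound for the two components
  have hTbd : ∀ ω : (Fin m × Fin n) × Fin m, ∀ k,
      |(if k = ω.1.1 then M ω.1.1 ω.1.2 * x ω.1.2 / qM ω.1 else 0)| ≤ b * SM := by
    intro ω k
    split
    · rcases eq_or_ne (M ω.1.1 ω.1.2) 0 with h | h
      · simp [h]; positivity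
      · have h' : |M ω.1.1 ω.1.2| ≠ 0 := abs_ne_zero.mpr h
        rw [hqM, div_div_eq_mul_div, abs_div, abs_abs, abs_mul, abs_mul,
          abs_of_pos hSM0, mul_assoc, mul_div_cancel_left₀ _ h']
        exact mul_le_mul_of_nonneg_right (hx _) hSM0.le
    · simpa using by positivity
  have hUbd : ∀ ω : (Fin m × Fin n) × Fin m, ∀ k,
      |(if k = ω.2 then c ω.2 / qc ω.2 else 0)| ≤ Sc := by
    intro ω k
    split
    · rcases eq_or_ne (c ω.2) 0 with h | h
      · simp [h]; exact hSc0.le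
      · have h' : |c ω.2| ≠ 0 := abs_ne_zero.mpr h
        rw [hqc, div_div_eq_mul_div, abs_div, abs_abs, abs_mul, abs_of_pos hSc0,
          mul_div_cancel_left₀ _ h']
    · simpa using hSc0.le
  refine ⟨?_, ?_, ?_⟩
  · -- unbiasedness
    intro k
    have expand : ∀ ω : (Fin m × Fin n) × Fin m,
        (qM ω.1 * qc ω.2) * g ω k =
        -((if k = ω.1.1 then M ω.1.1 ω.1.2 * x ω.1.2 else 0) * qc ω.2)
        + qM ω.1 * (if k = ω.2 then c ω.2 else 0) := by
      intro ω
      rw [hg]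
      have e : (qM ω.1 * qc ω.2) *
          (-(if k = ω.1.1 then M ω.1.1 ω.1.2 * x ω.1.2 / qM ω.1 else 0)
            + (if k = ω.2 then c ω.2 / qc ω.2 else 0))
          = -((qM ω.1 * (if k = ω.1.1 then M ω.1.1 ω.1.2 * x ω.1.2 / qM ω.1 else 0)) * qc ω.2)
            + qM ω.1 * (qc ω.2 * (if k = ω.2 then c ω.2 / qc ω.2 else 0)) := by ring
      rw [e]
      simp only [mul_ite, mul_zero, hA, hB]
    simp only [expand]
    rw [Finset.sum_add_distrib]
    congr 1
    · rw [Finset.sum_neg_distrib, neg_inj, Fintype.sum_prod_type]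
      simp only [← Finset.mul_sum, hsumqc, mul_one]
      rw [Fintype.sum_prod_type, Finset.sum_comm]
      simp [Finset.sum_ite_eq]
    · rw [Fintype.sum_prod_type]
      simp only [← Finset.mul_sum, Finset.sum_ite_eq, Finset.mem_univ, if_true]
      rw [← Finset.sum_mul, hsumqM, one_mul]
  · -- almost sure bound
    intro ω k
    rw [hg]
    refine le_trans (abs_add_le _ _) ?_
    rw [abs_neg]
    have h1 := hTbd ω k
    have h2 := hUbd ω k
    nlinarith [hSMle, hScle, hb, hKM0, hKc0]
  · -- second moment bound
    intro y hy hy1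
    set T : ((Fin m × Fin n) × Fin m) → Fin m → ℝ :=
      fun ω i => if i = ω.1.1 then M ω.1.1 ω.1.2 * x ω.1.2 / qM ω.1 else 0 with hTdef
    set U : ((Fin m × Fin n) × Fin m) → Fin m → ℝ :=
      fun ω i => if i = ω.2 then c ω.2 / qc ω.2 else 0 with hUdef
    have hg' : ∀ ω i, g ω i = -T ω i + U ω i := fun ω i => hg ω i
    have step1 : ∀ ω : (Fin m × Fin n) × Fin m,
        (∑ i, y i * (g ω i) ^ 2) ≤
        2 * (∑ i, y i * T ω i ^ 2) + 2 * (∑ i, y i * U ω i ^ 2) := by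
      intro ω
      rw [Finset.mul_sum, Finset.mul_sum, ← Finset.sum_add_distrib]
      refine Finset.sum_le_sum fun i _ => ?_
      rw [hg' ω i]
      nlinarith [mul_nonneg (hy i) (sq_nonneg (T ω i + U ω i))]
    have split : ∑ ω : (Fin m × Fin n) × Fin m, (qM ω.1 * qc ω.2) *
          (2 * (∑ i, y i * T ω i ^ 2) + 2 * (∑ i, y i * U ω i ^ 2))
        = 2 * ∑ ω : (Fin m × Fin n) × Fin m, (qM ω.1 * qc ω.2) * (∑ i, y i * T ω i ^ 2)
          + 2 * ∑ ω : (Fin m × Fin n) × Fin m, (qM ω.1 * qc ω.2) * (∑ i, y i * U ω i ^ 2) := by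
      rw [Finset.mul_sum, Finset.mul_sum, ← Finset.sum_add_distrib]
      exact Finset.sum_congr rfl fun ω _ => by ring
    -- the T-part expectation
    have hET : ∑ ω : (Fin m × Fin n) × Fin m, (qM ω.1 * qc ω.2) * (∑ i, y i * T ω i ^ 2)
        = ∑ p : Fin m × Fin n, qM p * (y p.1 * (M p.1 p.2 * x p.2 / qM p) ^ 2) := by
      rw [Fintype.sum_prod_type]
      refine Finset.sum_congr rfl fun p _ => ?_
      have hin : ∀ i' : Fin m, (∑ i, y i * T (p, i') i ^ 2)
          = y p.1 * (M p.1 p.2 * x p.2 / qM p) ^ 2 := by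
        intro i'
        simp [hTdef, apply_ite (fun t : ℝ => t ^ 2), mul_ite, mul_zero, Finset.sum_ite_eq']
      have h1 : ∀ i' : Fin m, (qM p * qc i') * (∑ i, y i * T (p, i') i ^ 2)
          = qc i' * (qM p * (y p.1 * (M p.1 p.2 * x p.2 / qM p) ^ 2)) := by
        intro i'; rw [hin i']; ring
      simp only [h1]
      rw [← Finset.sum_mul, hsumqc, one_mul]
    -- the U-part expectation
    have hEU : ∑ ω : (Fin m × Fin n) × Fin m, (qM ω.1 * qc ω.2) * (∑ i, y i * U ω i ^ 2)
        = ∑ i' : Fin m, qc i' * (y i' * (c i' / qc i') ^ 2) := by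
      rw [Fintype.sum_prod_type]
      have hin : ∀ p : Fin m × Fin n, ∀ i' : Fin m, (∑ i, y i * U (p, i') i ^ 2)
          = y i' * (c i' / qc i') ^ 2 := by
        intro p i'
        simp [hUdef, apply_ite (fun t : ℝ => t ^ 2), mul_ite, mul_zero, Finset.sum_ite_eq']
      have h1 : ∀ p : Fin m × Fin n, ∑ i' : Fin m, (qM p * qc i') * (∑ i, y i * U (p, i') i ^ 2)
          = qM p * ∑ i' : Fin m, qc i' * (y i' * (c i' / qc i') ^ 2) := by
        intro p
        rw [Finset.mul_sum]
        refine Finset.sum_congr rfl fun i' _ => ?_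
        rw [hin p i']; ring
      simp only [h1]
      rw [← Finset.sum_mul, hsumqM, one_mul]
    -- bound the T-part
    have hpb : ∀ p : Fin m × Fin n, qM p * (y p.1 * (M p.1 p.2 * x p.2 / qM p) ^ 2)
        ≤ y p.1 * (b ^ 2 * (SM * |M p.1 p.2|)) := by
      intro p
      rcases eq_or_ne (M p.1 p.2) 0 with h | h
      · simp [h]
      · have h' : |M p.1 p.2| ≠ 0 := abs_ne_zero.mpr h
        have key : qM p * (M p.1 p.2 * x p.2 / qM p) ^ 2
            = x p.2 ^ 2 * (SM * |M p.1 p.2|) := by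
          rw [hqM, div_div_eq_mul_div, div_pow, mul_pow, mul_pow, sq_abs]
          field_simp
        have hx2 : x p.2 ^ 2 ≤ b ^ 2 :=
          sq_le_sq' (abs_le.mp (hx p.2)).1 (abs_le.mp (hx p.2)).2
        calc qM p * (y p.1 * (M p.1 p.2 * x p.2 / qM p) ^ 2)
            = y p.1 * (qM p * (M p.1 p.2 * x p.2 / qM p) ^ 2) := by ring
          _ = y p.1 * (x p.2 ^ 2 * (SM * |M p.1 p.2|)) := by rw [key]
          _ ≤ y p.1 * (b ^ 2 * (SM * |M p.1 p.2|)) := by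
              refine mul_le_mul_of_nonneg_left ?_ (hy p.1)
              exact mul_le_mul_of_nonneg_right hx2 (by positivity)
    have hTsum : ∑ p : Fin m × Fin n, y p.1 * (b ^ 2 * (SM * |M p.1 p.2|))
        ≤ b ^ 2 * SM * KM := by
      rw [Fintype.sum_prod_type]
      have e : ∀ i : Fin m, ∑ j, y i * (b ^ 2 * (SM * |M i j|))
          = (b ^ 2 * SM * y i) * ∑ j, |M i j| := by
        intro i
        rw [Finset.mul_sum Finset.univ (fun j => |M i j|) (b ^ 2 * SM * y i)]
        refine Finset.sum_congr rfl fun j _ => ?_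
        ring
      simp only [e]
      calc ∑ i : Fin m, (b ^ 2 * SM * y i) * ∑ j, |M i j|
          ≤ ∑ i : Fin m, (b ^ 2 * SM * y i) * KM := by
            refine Finset.sum_le_sum fun i _ => ?_
            exact mul_le_mul_of_nonneg_left (hKMle i)
              (mul_nonneg (by positivity) (hy i))
        _ = (b ^ 2 * SM * KM) * ∑ i, y i := by
            rw [Finset.mul_sum Finset.univ y (b ^ 2 * SM * KM)]
            refine Finset.sum_congr rfl fun i _ => ?_
            ring
        _ = b ^ 2 * SM * KM := by rw [hy1, mul_one]
    -- bound the U-part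
    have hub : ∀ i' : Fin m, qc i' * (y i' * (c i' / qc i') ^ 2) = y i' * (Sc * |c i'|) := by
      intro i'
      rcases eq_or_ne (c i') 0 with h | h
      · simp [h]
      · have h' : |c i'| ≠ 0 := abs_ne_zero.mpr h
        rw [hqc, div_div_eq_mul_div, div_pow, mul_pow, sq_abs]
        field_simp
    have hUsum : ∑ i' : Fin m, y i' * (Sc * |c i'|) ≤ Sc * Kc := by
      calc ∑ i' : Fin m, y i' * (Sc * |c i'|) ≤ ∑ i' : Fin m, y i' * (Sc * Kc) := by
            refine Finset.sum_le_sum fun i _ => ?_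
            exact mul_le_mul_of_nonneg_left
              (mul_le_mul_of_nonneg_left (hKcle i) hSc0.le) (hy i)
        _ = Sc * Kc := by
            rw [← Finset.sum_mul Finset.univ y (Sc * Kc), hy1, one_mul]
    calc ∑ ω : (Fin m × Fin n) × Fin m, (qM ω.1 * qc ω.2) * (∑ i, y i * (g ω i) ^ 2)
        ≤ ∑ ω : (Fin m × Fin n) × Fin m, (qM ω.1 * qc ω.2) *
            (2 * (∑ i, y i * T ω i ^ 2) + 2 * (∑ i, y i * U ω i ^ 2)) :=
          Finset.sum_le_sum fun ω _ => mul_le_mul_of_nonneg_left (step1 ω)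
            (mul_nonneg (hqMnn _) (hqcnn _))
      _ = 2 * ∑ ω : (Fin m × Fin n) × Fin m, (qM ω.1 * qc ω.2) * (∑ i, y i * T ω i ^ 2)
          + 2 * ∑ ω : (Fin m × Fin n) × Fin m, (qM ω.1 * qc ω.2) * (∑ i, y i * U ω i ^ 2) :=
          split
      _ ≤ 2 * (b ^ 2 * SM * KM) + 2 * (Sc * Kc) := by
          rw [hET, hEU]
          have t1 : ∑ p : Fin m × Fin n, qM p * (y p.1 * (M p.1 p.2 * x p.2 / qM p) ^ 2)
              ≤ b ^ 2 * SM * KM :=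
            le_trans (Finset.sum_le_sum fun p _ => hpb p) hTsum
          have t2 : ∑ i' : Fin m, qc i' * (y i' * (c i' / qc i') ^ 2) ≤ Sc * Kc := by
            calc ∑ i' : Fin m, qc i' * (y i' * (c i' / qc i') ^ 2)
                = ∑ i' : Fin m, y i' * (Sc * |c i'|) :=
                  Finset.sum_congr rfl fun i' _ => hub i'
              _ ≤ Sc * Kc := hUsum
          linarith
      _ ≤ 2 * m * (Kc ^ 2 + b ^ 2 * KM ^ 2) := by
          nlinarith [mul_le_mul_of_nonneg_left hSMle (mul_nonneg (sq_nonneg b) hKM0),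
            mul_le_mul_of_nonneg_left hScle hKc0]
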